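/- arXiv:2605.03478 — 2 statements merged into one kernel-verified Lean document; each statement's English description precedes it below -/
import Mathlib

section
/- Let G be a finite simple graph with an orientation of its edges and triangles. The (e,e') entry of the Helmholtzian matrix H(G) = B Bᵀ + Cᵀ C equals: △(e) + 2 if e' = e; -1 if e⁺ = e'⁻ or e⁻ = e'⁺ and e, e' lie in no common triangle; 1 if e⁺ = e'⁺ or e⁻ = e'⁻ and e, e' lie in no common triangle; and 0 otherwise. -/
open scoped Classical
open scoped Matrix

namespace HelmPaper

variable {V : Type} [Fintype V] [DecidableEq V]

/-- The set of triangles of `G`, i.e. the 3-element cliques of `G`. -/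
abbrev Triangle (G : SimpleGraph V) : Type :=
  {s : Finset V // s.card = 3 ∧ G.IsClique (s : Set V)}

/-- An orientation of the edges of `G`: each edge `e` gets a head `e⁺` and a tail `e⁻`. -/
structure Orientation (G : SimpleGraph V) where
  head : G.edgeSet → V
  tail : G.edgeSet → V
  consistent : ∀ e : G.edgeSet, (e : Sym2 V) = s(head e, tail e)

/-- A cyclic orientation of each triangle of `G`, recorded by a representative ordered
triple of its three vertices. -/
structure TriOrientation (G : SimpleGraph V) where
  fst : Triangle G → V
  snd : Triangle G → V
  trd : Triangle G → V
  consistent : ∀ t : Triangle G, ({fst t, snd t, trd t} : Finset V) = t.val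

/-- The edge-vertex incidence matrix `B`. -/
noncomputable def bMat (G : SimpleGraph V) (o : Orientation G) : Matrix G.edgeSet V ℝ :=
  fun e v => if v = o.head e then 1 else if v = o.tail e then -1 else 0

/-- The oriented edge `e` agrees with the cyclic orientation of the triangle `t`. -/
def Agrees {G : SimpleGraph V} (o : Orientation G) (τ : TriOrientation G)
    (e : G.edgeSet) (t : Triangle G) : Prop :=
  (o.tail e = τ.fst t ∧ o.head e = τ.snd t) ∨
  (o.tail e = τ.snd t ∧ o.head e = τ.trd t) ∨
  (o.tail e = τ.trd t ∧ o.head e = τ.fst t)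

/-- The oriented edge `e` disagrees with the cyclic orientation of the triangle `t`. -/
def Disagrees {G : SimpleGraph V} (o : Orientation G) (τ : TriOrientation G)
    (e : G.edgeSet) (t : Triangle G) : Prop :=
  (o.head e = τ.fst t ∧ o.tail e = τ.snd t) ∨
  (o.head e = τ.snd t ∧ o.tail e = τ.trd t) ∨
  (o.head e = τ.trd t ∧ o.tail e = τ.fst t)

/-- The triangle-edge incidence matrix `C`. -/
noncomputable def cMat (G : SimpleGraph V) (o : Orientation G) (τ : TriOrientation G) :
    Matrix (Triangle G) G.edgeSet ℝ :=
  fun t e => if Agrees o τ e t then 1 else if Disagrees o τ e t then -1 else 0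

/-- The Helmholtzian matrix `H(G) = B Bᵀ + Cᵀ C`. -/
noncomputable def helm (G : SimpleGraph V) (o : Orientation G) (τ : TriOrientation G) :
    Matrix G.edgeSet G.edgeSet ℝ :=
  bMat G o * (bMat G o)ᵀ + (cMat G o τ)ᵀ * cMat G o τ

/-- The edge `e` (as an unordered pair of vertices) lies in the triangle `t`. -/
def EdgeInTri (G : SimpleGraph V) (e : Sym2 V) (t : Triangle G) : Prop :=
  ∀ v ∈ e, v ∈ t.val

/-- The triangle degree `△(e)`: the number of triangles of `G` containing the edge `e`. -/
noncomputable def triDeg (G : SimpleGraph V) (e : Sym2 V) : ℕ :=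
  (Finset.univ.filter fun t : Triangle G => EdgeInTri G e t).card

set_option linter.unusedSectionVars false
set_option linter.unreachableTactic false
set_option linter.unusedTactic false
section Helpers

variable {G : SimpleGraph V} {o : Orientation G} {τ : TriOrientation G}

lemma head_ne_tail (o : Orientation G) (e : G.edgeSet) : o.head e ≠ o.tail e := by
  have h := e.property
  rw [show (e : Sym2 V) = s(o.head e, o.tail e) from o.consistent e,
    SimpleGraph.mem_edgeSet] at h
  exact h.ne

lemma edge_ext {e e' : G.edgeSet} (h : o.head e = o.head e') (h' : o.tail e = o.tail e') :
    e = e' := by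
  apply Subtype.ext
  rw [show (e : Sym2 V) = _ from o.consistent e, show (e' : Sym2 V) = _ from o.consistent e',
    h, h']

lemma edge_ext_swap {e e' : G.edgeSet} (h : o.head e = o.tail e') (h' : o.tail e = o.head e') :
    e = e' := by
  apply Subtype.ext
  rw [show (e : Sym2 V) = _ from o.consistent e, show (e' : Sym2 V) = _ from o.consistent e',
    h, h', Sym2.eq_swap]

lemma mem_head (o : Orientation G) (e : G.edgeSet) : o.head e ∈ (e : Sym2 V) := by
  rw [o.consistent e]; exact Sym2.mem_mk_left _ _

lemma mem_tail (o : Orientation G) (e : G.edgeSet) : o.tail e ∈ (e : Sym2 V) := by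
  rw [o.consistent e]; exact Sym2.mem_mk_right _ _

lemma tri_distinct (τ : TriOrientation G) (t : Triangle G) :
    τ.fst t ≠ τ.snd t ∧ τ.snd t ≠ τ.trd t ∧ τ.fst t ≠ τ.trd t := by
  have h : ({τ.fst t, τ.snd t, τ.trd t} : Finset V).card = 3 := by
    rw [τ.consistent t]; exact t.prop.1
  have hp : ∀ x y : V, ({x, y} : Finset V).card ≤ 2 :=
    fun x y => (Finset.card_insert_le _ _).trans (by simp)
  refine ⟨?_, ?_, ?_⟩ <;> intro hEq <;> rw [hEq] at h
  · have hs : ({τ.snd t, τ.snd t, τ.trd t} : Finset V) ⊆ {τ.snd t, τ.trd t} := by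
      intro x hx; simp at hx ⊢; tauto
    have := (Finset.card_le_card hs).trans (hp _ _); omega
  · have hs : ({τ.fst t, τ.trd t, τ.trd t} : Finset V) ⊆ {τ.fst t, τ.trd t} := by
      intro x hx; simp at hx ⊢; tauto
    have := (Finset.card_le_card hs).trans (hp _ _); omega
  · have hs : ({τ.trd t, τ.snd t, τ.trd t} : Finset V) ⊆ {τ.snd t, τ.trd t} := by
      intro x hx; simp at hx ⊢; tauto
    have := (Finset.card_le_card hs).trans (hp _ _); omega

lemma edgeInTri_iff (e : G.edgeSet) (t : Triangle G) :
    EdgeInTri G (e : Sym2 V) t ↔ Agrees o τ e t ∨ Disagrees o τ e t := by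
  constructor
  · intro h
    have hh : o.head e ∈ t.val := h _ (mem_head o e)
    have ht : o.tail e ∈ t.val := h _ (mem_tail o e)
    rw [← τ.consistent t] at hh ht
    simp only [Finset.mem_insert, Finset.mem_singleton] at hh ht
    have hne := head_ne_tail o e
    unfold Agrees Disagrees
    rcases hh with h1|h1|h1 <;> rcases ht with h2|h2|h2 <;>
      first
        | exact absurd (h1.trans h2.symm) hne
        | tauto
  · intro h v hv
    rw [o.consistent e, Sym2.mem_iff] at hv
    rw [← τ.consistent t]
    rcases h with (⟨h1,h2⟩|⟨h1,h2⟩|⟨h1,h2⟩)|(⟨h1,h2⟩|⟨h1,h2⟩|⟨h1,h2⟩) <;>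
      rcases hv with rfl|rfl <;> simp [h1, h2]

lemma not_agrees_and_disagrees (e : G.edgeSet) (t : Triangle G) :
    ¬(Agrees o τ e t ∧ Disagrees o τ e t) := by
  obtain ⟨d1, d2, d3⟩ := tri_distinct τ t
  have hne := head_ne_tail o e
  rintro ⟨(⟨h1,h2⟩|⟨h1,h2⟩|⟨h1,h2⟩), (⟨h3,h4⟩|⟨h3,h4⟩|⟨h3,h4⟩)⟩ <;> simp_all

lemma cMat_of_agrees {e : G.edgeSet} {t : Triangle G} (h : Agrees o τ e t) :
    cMat G o τ t e = 1 := if_pos h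

lemma cMat_of_disagrees {e : G.edgeSet} {t : Triangle G} (h : Disagrees o τ e t) :
    cMat G o τ t e = -1 := by
  unfold cMat
  rw [if_neg (fun ha => not_agrees_and_disagrees e t ⟨ha, h⟩), if_pos h]

lemma cMat_of_not {e : G.edgeSet} {t : Triangle G} (h : ¬ EdgeInTri G (e : Sym2 V) t) :
    cMat G o τ t e = 0 := by
  rw [edgeInTri_iff (o := o) (τ := τ)] at h
  push_neg at h
  unfold cMat
  rw [if_neg h.1, if_neg h.2]

lemma bb_apply (e e' : G.edgeSet) :
    (bMat G o * (bMat G o)ᵀ) e e' = bMat G o e' (o.head e) - bMat G o e' (o.tail e) := by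
  have hne := head_ne_tail o e
  have key : ∀ v, bMat G o e v * (bMat G o)ᵀ v e' =
      (if v = o.head e then bMat G o e' v else 0) +
      (if v = o.tail e then -(bMat G o e' v) else 0) := by
    intro v
    simp only [bMat, Matrix.transpose_apply]
    split_ifs <;> simp_all <;> ring
  rw [Matrix.mul_apply, Finset.sum_congr rfl fun v _ => key v, Finset.sum_add_distrib]
  simp [Finset.sum_ite_eq', sub_eq_add_neg]

lemma cc_apply (e e' : G.edgeSet) :
    ((cMat G o τ)ᵀ * cMat G o τ) e e' =
      ∑ t : Triangle G, cMat G o τ t e * cMat G o τ t e' := by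
  simp [Matrix.mul_apply]

lemma cc_diag (e : G.edgeSet) :
    ∑ t : Triangle G, cMat G o τ t e * cMat G o τ t e = (triDeg G (e : Sym2 V) : ℝ) := by
  have key : ∀ t : Triangle G, cMat G o τ t e * cMat G o τ t e =
      if EdgeInTri G (e : Sym2 V) t then (1 : ℝ) else 0 := by
    intro t
    have hE := edgeInTri_iff (o := o) (τ := τ) e t
    unfold cMat
    split_ifs <;> norm_num <;> tauto
  rw [Finset.sum_congr rfl fun t _ => key t]
  rw [triDeg, Finset.card_filter]
  push_cast
  rfl

lemma cc_zero (e e' : G.edgeSet)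
    (h : ¬∃ t : Triangle G, EdgeInTri G (e : Sym2 V) t ∧ EdgeInTri G (e' : Sym2 V) t) :
    ∑ t : Triangle G, cMat G o τ t e * cMat G o τ t e' = 0 := by
  apply Finset.sum_eq_zero
  intro t _
  by_cases h1 : EdgeInTri G (e : Sym2 V) t
  · rw [cMat_of_not (fun h2 => h ⟨t, h1, h2⟩), mul_zero]
  · rw [cMat_of_not h1, zero_mul]

lemma common_tri_unique (o : Orientation G) {e e' : G.edgeSet} (hne : e ≠ e') {t t' : Triangle G}
    (h1 : EdgeInTri G (e : Sym2 V) t) (h2 : EdgeInTri G (e' : Sym2 V) t)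
    (h3 : EdgeInTri G (e : Sym2 V) t') (h4 : EdgeInTri G (e' : Sym2 V) t') : t = t' := by
  set S : Finset V := {o.head e, o.tail e, o.head e', o.tail e'} with hS
  have hsub : ∀ {u : Triangle G}, EdgeInTri G (e : Sym2 V) u → EdgeInTri G (e' : Sym2 V) u →
      S ⊆ u.val := by
    intro u hu hu'
    intro x hx
    rw [hS] at hx
    simp only [Finset.mem_insert, Finset.mem_singleton] at hx
    rcases hx with rfl|rfl|rfl|rfl
    · exact hu _ (mem_head o e)
    · exact hu _ (mem_tail o e)
    · exact hu' _ (mem_head o e')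
    · exact hu' _ (mem_tail o e')
  have hcard : 3 ≤ S.card := by
    by_contra hlt
    push_neg at hlt
    have hp : ({o.head e, o.tail e} : Finset V) ⊆ S := by
      intro x hx; rw [hS]; simp at hx ⊢; tauto
    have hc2 : ({o.head e, o.tail e} : Finset V).card = 2 :=
      Finset.card_pair (head_ne_tail o e)
    have hEq : ({o.head e, o.tail e} : Finset V) = S := by
      apply Finset.eq_of_subset_of_card_le hp
      omega
    have hh' : o.head e' ∈ ({o.head e, o.tail e} : Finset V) := by
      rw [hEq]; simp [hS]
    have ht' : o.tail e' ∈ ({o.head e, o.tail e} : Finset V) := by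
      rw [hEq]; simp [hS]
    simp only [Finset.mem_insert, Finset.mem_singleton] at hh' ht'
    have hne' := head_ne_tail o e'
    rcases hh' with hh'|hh' <;> rcases ht' with ht'|ht'
    · exact hne' (hh'.trans ht'.symm)
    · exact hne (edge_ext hh'.symm ht'.symm)
    · exact hne (edge_ext_swap ht'.symm hh'.symm)
    · exact hne' (hh'.trans ht'.symm)
  have hT : S = t.val := by
    apply Finset.eq_of_subset_of_card_le (hsub h1 h2)
    rw [t.prop.1]; exact hcard
  have hT' : S = t'.val := by
    apply Finset.eq_of_subset_of_card_le (hsub h3 h4)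
    rw [t'.prop.1]; exact hcard
  exact Subtype.ext (hT ▸ hT')

end Helpers
set_option maxHeartbeats 2000000
/-- The entries of the Helmholtzian matrix `H(G) = B Bᵀ + Cᵀ C`:
`△(e) + 2` on the diagonal; `-1` if `e⁺ = e'⁻` or `e⁻ = e'⁺` and `e, e'` lie in no common
triangle; `1` if `e⁺ = e'⁺` or `e⁻ = e'⁻` and `e, e'` lie in no common triangle;
`0` otherwise. -/
theorem statement3 (G : SimpleGraph V) (o : Orientation G) (τ : TriOrientation G)
    (e e' : G.edgeSet) :
    (e' = e → helm G o τ e e' = (triDeg G (e : Sym2 V) : ℝ) + 2) ∧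
    (e' ≠ e → (o.head e = o.tail e' ∨ o.tail e = o.head e') →
      ¬(∃ t : Triangle G, EdgeInTri G (e : Sym2 V) t ∧ EdgeInTri G (e' : Sym2 V) t) →
      helm G o τ e e' = -1) ∧
    (e' ≠ e → (o.head e = o.head e' ∨ o.tail e = o.tail e') →
      ¬(∃ t : Triangle G, EdgeInTri G (e : Sym2 V) t ∧ EdgeInTri G (e' : Sym2 V) t) →
      helm G o τ e e' = 1) ∧
    (e' ≠ e →
      ¬((o.head e = o.tail e' ∨ o.tail e = o.head e') ∧
        ¬∃ t : Triangle G, EdgeInTri G (e : Sym2 V) t ∧ EdgeInTri G (e' : Sym2 V) t) →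
      ¬((o.head e = o.head e' ∨ o.tail e = o.tail e') ∧
        ¬∃ t : Triangle G, EdgeInTri G (e : Sym2 V) t ∧ EdgeInTri G (e' : Sym2 V) t) →
      helm G o τ e e' = 0) := by
  have hne1 := head_ne_tail o e
  have hne2 := head_ne_tail o e'
  refine ⟨?_, ?_, ?_, ?_⟩
  · rintro rfl
    rw [helm, Matrix.add_apply, bb_apply, cc_apply, cc_diag]
    simp [bMat, hne1, hne1.symm]
    ring
  · intro hne hco hnt
    rw [helm, Matrix.add_apply, bb_apply, cc_apply, cc_zero e e' hnt, add_zero]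
    rcases hco with h|h
    · have f1 : o.head e ≠ o.head e' := fun hh => hne2 (hh.symm.trans h)
      have f2 : o.tail e ≠ o.head e' := fun ht => hne (edge_ext_swap h ht).symm
      have f3 : o.tail e ≠ o.tail e' := fun ht => hne1 (h.trans ht.symm)
      simp [bMat, h, f1, f2, f3, hne2.symm]
    · have f1 : o.head e ≠ o.head e' := fun hh => hne1 (hh.trans h.symm)
      have f2 : o.head e ≠ o.tail e' := fun hh => hne (edge_ext_swap hh h).symm
      simp [bMat, h, f1, f2, hne2.symm]
  · intro hne hco hnt
    rw [helm, Matrix.add_apply, bb_apply, cc_apply, cc_zero e e' hnt, add_zero]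
    rcases hco with h|h
    · have f2 : o.tail e ≠ o.head e' := fun ht => hne1 (h.trans ht.symm)
      have f3 : o.tail e ≠ o.tail e' := fun ht => hne (edge_ext h ht).symm
      simp [bMat, h, f2, f3]
    · have f1 : o.head e ≠ o.head e' := fun hh => hne (edge_ext hh h).symm
      have f2 : o.head e ≠ o.tail e' := fun hh => hne1 (hh.trans h.symm)
      simp [bMat, h, f1, f2, hne2.symm]
  · intro hne hn1 hn2
    rw [helm, Matrix.add_apply, bb_apply, cc_apply]
    by_cases hT : ∃ t : Triangle G, EdgeInTri G (e : Sym2 V) t ∧ EdgeInTri G (e' : Sym2 V) t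
    · obtain ⟨t0, he0, he0'⟩ := hT
      have hsingle : ∑ t : Triangle G, cMat G o τ t e * cMat G o τ t e' =
          cMat G o τ t0 e * cMat G o τ t0 e' := by
        apply Finset.sum_eq_single
        · intro t _ htne
          by_cases h1 : EdgeInTri G (e : Sym2 V) t
          · by_cases h2 : EdgeInTri G (e' : Sym2 V) t
            · exact absurd
                (common_tri_unique o (fun h => hne h.symm) h1 h2 he0 he0') htne
            · rw [cMat_of_not h2, mul_zero]
          · rw [cMat_of_not h1, zero_mul]
        · intro h; exact absurd (Finset.mem_univ t0) h
      rw [hsingle]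
      obtain ⟨d1, d2, d3⟩ := tri_distinct τ t0
      have hA := (edgeInTri_iff (o := o) (τ := τ) e t0).mp he0
      have hA' := (edgeInTri_iff (o := o) (τ := τ) e' t0).mp he0'
      rcases hA with (⟨h1,h2⟩|⟨h1,h2⟩|⟨h1,h2⟩)|(⟨h1,h2⟩|⟨h1,h2⟩|⟨h1,h2⟩) <;>
        rcases hA' with (⟨h3,h4⟩|⟨h3,h4⟩|⟨h3,h4⟩)|(⟨h3,h4⟩|⟨h3,h4⟩|⟨h3,h4⟩) <;>
        first
          | exact absurd (edge_ext (h2.trans h4.symm) (h1.trans h3.symm)).symm hne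
          | exact absurd (edge_ext (h1.trans h3.symm) (h2.trans h4.symm)).symm hne
          | exact absurd (edge_ext_swap (h2.trans h4.symm) (h1.trans h3.symm)).symm hne
          | exact absurd (edge_ext_swap (h1.trans h3.symm) (h2.trans h4.symm)).symm hne
          | (first
              | rw [show cMat G o τ t0 e = 1 from
                  cMat_of_agrees (by
                    first
                      | exact Or.inl ⟨h1, h2⟩
                      | exact Or.inr (Or.inl ⟨h1, h2⟩)
                      | exact Or.inr (Or.inr ⟨h1, h2⟩)
                      | exact Or.inl ⟨h3, h4⟩
                      | exact Or.inr (Or.inl ⟨h3, h4⟩)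
                      | exact Or.inr (Or.inr ⟨h3, h4⟩))]
              | rw [show cMat G o τ t0 e = -1 from
                  cMat_of_disagrees (by
                    first
                      | exact Or.inl ⟨h1, h2⟩
                      | exact Or.inr (Or.inl ⟨h1, h2⟩)
                      | exact Or.inr (Or.inr ⟨h1, h2⟩)
                      | exact Or.inl ⟨h3, h4⟩
                      | exact Or.inr (Or.inl ⟨h3, h4⟩)
                      | exact Or.inr (Or.inr ⟨h3, h4⟩))]
             first
              | rw [show cMat G o τ t0 e' = 1 from
                  cMat_of_agrees (by
                    first
                      | exact Or.inl ⟨h1, h2⟩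
                      | exact Or.inr (Or.inl ⟨h1, h2⟩)
                      | exact Or.inr (Or.inr ⟨h1, h2⟩)
                      | exact Or.inl ⟨h3, h4⟩
                      | exact Or.inr (Or.inl ⟨h3, h4⟩)
                      | exact Or.inr (Or.inr ⟨h3, h4⟩))]
              | rw [show cMat G o τ t0 e' = -1 from
                  cMat_of_disagrees (by
                    first
                      | exact Or.inl ⟨h1, h2⟩
                      | exact Or.inr (Or.inl ⟨h1, h2⟩)
                      | exact Or.inr (Or.inr ⟨h1, h2⟩)
                      | exact Or.inl ⟨h3, h4⟩
                      | exact Or.inr (Or.inl ⟨h3, h4⟩)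
                      | exact Or.inr (Or.inr ⟨h3, h4⟩))]
             simp [bMat, h1, h2, h3, h4, d1, d2, d3, d1.symm, d2.symm, d3.symm]
             try norm_num)
    · rw [cc_zero e e' hT, add_zero]
      push_neg at hn1 hn2
      have f1 : o.head e ≠ o.tail e' := fun h => hT (hn1 (Or.inl h))
      have f2 : o.tail e ≠ o.head e' := fun h => hT (hn1 (Or.inr h))
      have f3 : o.head e ≠ o.head e' := fun h => hT (hn2 (Or.inl h))
      have f4 : o.tail e ≠ o.tail e' := fun h => hT (hn2 (Or.inr h))
      simp [bMat, f1, f2, f3, f4]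

end HelmPaper
end

section
/- Let G be a finite simple graph. If there exists an orientation of the edges and triangles of G such that every entry of the Helmholtzian matrix H(G) is non-negative, then G has no induced odd cycle of length ≥ 5. -/
open scoped Classical
open scoped Matrix

namespace HelmPaper

variable {V : Type} [Fintype V] [DecidableEq V]

/-- The map `v : ZMod k → V` traces a cycle of length `k` in `G` (distinct vertices,
consecutive ones adjacent). -/
def IsCycleIn (G : SimpleGraph V) (k : ℕ) (v : ZMod k → V) : Prop :=
  Function.Injective v ∧ ∀ i, G.Adj (v i) (v (i + 1))

/-- The map `v : ZMod k → V` traces an induced (chordless) cycle of length `k` in `G`. -/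
def IsInducedCycleIn (G : SimpleGraph V) (k : ℕ) (v : ZMod k → V) : Prop :=
  IsCycleIn G k v ∧ ∀ i j, G.Adj (v i) (v j) → j = i + 1 ∨ i = j + 1

/-- If there exists an orientation of the edges and triangles of `G`
such that every entry of `H(G)` is non-negative, then `G` has no induced odd cycle of
length at least `5`. -/
theorem statement12 (G : SimpleGraph V)
    (h : ∃ (o : Orientation G) (τ : TriOrientation G),
      ∀ e e' : G.edgeSet, 0 ≤ helm G o τ e e') :
    ¬∃ (k : ℕ) (v : ZMod k → V), 5 ≤ k ∧ Odd k ∧ IsInducedCycleIn G k v := by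
  obtain ⟨o, τ, hH⟩ := h
  rintro ⟨k, v, hk, hodd, ⟨⟨hinj, hadj⟩, hchord⟩⟩
  haveI hkz : NeZero k := ⟨by omega⟩
  have hcast : ∀ n : ℕ, 0 < n → n < k → ((n : ZMod k) ≠ 0) := by
    intro n hn hnk h0
    rw [ZMod.natCast_eq_zero_iff] at h0
    exact absurd (Nat.le_of_dvd hn h0) (by omega)
  have h1 : ∀ i : ZMod k, i ≠ i + 1 := by
    intro i hi
    exact hcast 1 (by omega) (by omega) (by simpa using (left_eq_add.mp hi))
  have h2 : ∀ i : ZMod k, i ≠ i + 1 + 1 := by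
    intro i hi
    have h2' : ((2 : ℕ) : ZMod k) = 0 := by push_cast; linear_combination -hi
    exact hcast 2 (by omega) (by omega) h2'
  -- the edges of the cycle
  set e : ZMod k → G.edgeSet := fun i => ⟨s(v i, v (i + 1)), hadj i⟩ with he
  have hends : ∀ i, (o.head (e i) = v i ∧ o.tail (e i) = v (i + 1)) ∨
      (o.head (e i) = v (i + 1) ∧ o.tail (e i) = v i) := by
    intro i
    have hc := o.consistent (e i)
    rw [show ((e i : Sym2 V)) = s(v i, v (i + 1)) from rfl, Sym2.eq_iff] at hc
    rcases hc with ⟨ha, hb⟩ | ⟨ha, hb⟩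
    · exact Or.inl ⟨ha.symm, hb.symm⟩
    · exact Or.inr ⟨hb.symm, ha.symm⟩
  -- no triangle contains two consecutive edges of the cycle
  have htri : ∀ i (t : Triangle G),
      cMat G o τ t (e i) * cMat G o τ t (e (i + 1)) = 0 := by
    intro i t
    by_contra hne
    obtain ⟨hne1, hne2⟩ := mul_ne_zero_iff.mp hne
    have hf : τ.fst t ∈ t.val := by rw [← τ.consistent t]; simp
    have hs : τ.snd t ∈ t.val := by rw [← τ.consistent t]; simp
    have htd : τ.trd t ∈ t.val := by rw [← τ.consistent t]; simp
    have hmem : ∀ j, cMat G o τ t (e j) ≠ 0 → v j ∈ t.val ∧ v (j + 1) ∈ t.val := by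
      intro j hj
      have hin : o.head (e j) ∈ t.val ∧ o.tail (e j) ∈ t.val := by
        unfold cMat at hj
        split_ifs at hj with hA hD
        · rcases hA with ⟨ht', hh'⟩ | ⟨ht', hh'⟩ | ⟨ht', hh'⟩ <;>
            exact ⟨by rw [hh']; assumption, by rw [ht']; assumption⟩
        · rcases hD with ⟨hh', ht'⟩ | ⟨hh', ht'⟩ | ⟨hh', ht'⟩ <;>
            exact ⟨by rw [hh']; assumption, by rw [ht']; assumption⟩
        · exact absurd rfl hj
      rcases hends j with ⟨hh', ht'⟩ | ⟨hh', ht'⟩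
      · exact ⟨hh' ▸ hin.1, ht' ▸ hin.2⟩
      · exact ⟨ht' ▸ hin.2, hh' ▸ hin.1⟩
    obtain ⟨hm1, hm2⟩ := hmem i hne1
    obtain ⟨hm2', hm3⟩ := hmem (i + 1) hne2
    have hvne : v i ≠ v (i + 1 + 1) := fun hvv => h2 i (hinj hvv)
    have hAdj : G.Adj (v i) (v (i + 1 + 1)) :=
      t.prop.2 (Finset.mem_coe.mpr hm1) (Finset.mem_coe.mpr hm3) hvne
    rcases hchord i (i + 1 + 1) hAdj with hc | hc
    · exact h1 (i + 1) hc.symm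
    · have h3' : ((3 : ℕ) : ZMod k) = 0 := by push_cast; linear_combination -hc
      exact hcast 3 (by omega) (by omega) h3'
  -- B vanishes away from the endpoints
  have hB0 : ∀ (j : ZMod k) (w : V), w ≠ v j → w ≠ v (j + 1) → bMat G o (e j) w = 0 := by
    intro j w hw1 hw2
    unfold bMat
    rcases hends j with ⟨hh', ht'⟩ | ⟨hh', ht'⟩ <;> rw [hh', ht'] <;>
      simp [hw1, hw2]
  -- the key sign inequality at the shared vertex
  have hsum : ∀ i, (0 : ℝ) ≤ bMat G o (e i) (v (i + 1)) * bMat G o (e (i + 1)) (v (i + 1)) := by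
    intro i
    have hH' := hH (e i) (e (i + 1))
    rw [helm, Matrix.add_apply, Matrix.mul_apply, Matrix.mul_apply] at hH'
    have hzero : ∑ t : Triangle G,
        (cMat G o τ)ᵀ (e i) t * cMat G o τ t (e (i + 1)) = 0 := by
      apply Finset.sum_eq_zero
      intro t _
      rw [Matrix.transpose_apply]
      exact htri i t
    rw [hzero, add_zero, Finset.sum_eq_single (v (i + 1))] at hH'
    · simpa using hH'
    · intro w _ hw
      by_cases hwi : w = v i
      · have hx : bMat G o (e (i + 1)) w = 0 := by
          apply hB0 <;> rw [hwi]
          · exact fun hvv => h1 i (hinj hvv)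
          · exact fun hvv => h2 i (hinj hvv)
        rw [Matrix.transpose_apply, hx, mul_zero]
      · rw [hB0 i w hwi hw, zero_mul]
    · intro hnm
      exact absurd (Finset.mem_univ _) hnm
  -- heads alternate along the cycle
  have key : ∀ i, (o.head (e i) = v (i + 1) ↔ o.head (e (i + 1)) = v (i + 1)) := by
    intro i
    have hvne1 : v (i + 1) ≠ v i := fun hvv => h1 i (hinj hvv.symm)
    have hvne2 : v (i + 1) ≠ v (i + 1 + 1) := fun hvv => h1 (i + 1) (hinj hvv)
    rcases hends i with ⟨hh', ht'⟩ | ⟨hh', ht'⟩ <;>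
      rcases hends (i + 1) with ⟨hh'', ht''⟩ | ⟨hh'', ht''⟩
    · -- tail-head meeting: entry = -1, contradiction
      exfalso
      have hx : bMat G o (e i) (v (i + 1)) = -1 := by
        unfold bMat; rw [hh', ht']; simp [hvne1]
      have hy : bMat G o (e (i + 1)) (v (i + 1)) = 1 := by
        unfold bMat; rw [hh'']; simp
      have := hsum i
      rw [hx, hy] at this
      norm_num at this
    · constructor
      · intro hx; exact absurd (hh'.symm.trans hx) hvne1.symm
      · intro hx; exact absurd (hh''.symm.trans hx) (fun hvv => hvne2 hvv.symm)
    · exact ⟨fun _ => hh'', fun _ => hh'⟩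
    · -- head-tail meeting: entry = -1, contradiction
      exfalso
      have hx : bMat G o (e i) (v (i + 1)) = 1 := by
        unfold bMat; rw [hh']; simp
      have hy : bMat G o (e (i + 1)) (v (i + 1)) = -1 := by
        unfold bMat; rw [hh'', ht'']; simp [hvne2]
      have := hsum i
      rw [hx, hy] at this
      norm_num at this
  -- parity argument
  set P : ZMod k → Prop := fun i => o.head (e i) = v (i + 1) with hP
  have hflip : ∀ i, P i ↔ ¬ P (i + 1) := by
    intro i
    have hvne2 : v (i + 1) ≠ v (i + 1 + 1) := fun hvv => h1 (i + 1) (hinj hvv)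
    rw [hP]
    simp only []
    rw [key i]
    rcases hends (i + 1) with ⟨hh'', ht''⟩ | ⟨hh'', ht''⟩
    · constructor
      · intro _ hx
        exact hvne2 (hh''.symm.trans hx)
      · intro _
        exact hh''
    · constructor
      · intro hx
        exact absurd (hh''.symm.trans hx) (fun hvv => hvne2 hvv.symm)
      · intro hx
        exact absurd hh'' (fun hy => hx hy)
  have main : ∀ n : ℕ, (P ((n : ℕ) : ZMod k) ↔ (Even n ↔ P 0)) := by
    intro n
    induction n with
    | zero => simp
    | succ n ih =>
      have hc : (((n + 1 : ℕ)) : ZMod k) = ((n : ℕ) : ZMod k) + 1 := by push_cast; ring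
      rw [hc, Nat.even_add_one]
      have := hflip ((n : ℕ) : ZMod k)
      tauto
  have hfin := main k
  rw [ZMod.natCast_self] at hfin
  have hnotEven : ¬ Even k := Nat.not_even_iff_odd.mpr hodd
  tauto

end HelmPaper
end
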